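/- For every prime p ≥ 5, the three integers p−1, p(p−1), and p²−1 all belong to J_p, i.e., ν_p(H(p−1)) ≥ 1, ν_p(H(p(p−1))) ≥ 1, and ν_p(H(p²−1)) ≥ 1. -/

import Mathlib

def H (n : ℕ) : ℚ := ∑ i ∈ Finset.range n, (1 : ℚ) / (i + 1)

open Finset

lemma H_pos {n : ℕ} (hn : 0 < n) : 0 < H n := by
  apply Finset.sum_pos
  · intro i _; positivity
  · exact nonempty_range_iff.mpr hn.ne'

lemma sum_pairs {M : Type*} [AddCommMonoid M] (f : ℕ → M) (m : ℕ) :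
    ∑ i ∈ range (m+m), f i = ∑ r ∈ range m, (f r + f (m + m - 1 - r)) := by
  rw [Finset.sum_range_add, Finset.sum_add_distrib]
  congr 1
  rw [← Finset.sum_range_reflect (fun j => f (m + j)) m]
  exact Finset.sum_congr rfl fun r hr => by
    simp only [mem_range] at hr; congr 1; omega

lemma pair_val (p : ℕ) [hp : Fact p.Prime] {a b : ℕ} (ha : 0 < a) (hb : 0 < b)
    (hpa : ¬ p ∣ a) (hpb : ¬ p ∣ b) (hab : p ∣ (a + b)) :
    0 < padicValRat p ((1 : ℚ)/a + 1/b) := by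
  have haQ : (a : ℚ) ≠ 0 := by positivity
  have hbQ : (b : ℚ) ≠ 0 := by positivity
  have he : (1 : ℚ)/a + 1/b = ((a + b : ℕ) : ℚ) / ((a * b : ℕ) : ℚ) := by
    push_cast; field_simp; ring
  have hs : ((a + b : ℕ) : ℚ) ≠ 0 := by positivity
  have hm : ((a * b : ℕ) : ℚ) ≠ 0 := by positivity
  rw [he, padicValRat.div hs hm, padicValRat.of_nat, padicValRat.of_nat]
  have h1 : 1 ≤ padicValNat p (a + b) :=
    one_le_padicValNat_of_dvd (by omega) hab
  have h2 : padicValNat p (a * b) = 0 := by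
    apply padicValNat.eq_zero_of_not_dvd
    intro h
    rcases (Nat.Prime.dvd_mul hp.out).mp h with h | h <;> [exact hpa h; exact hpb h]
  rw [h2]
  simp only [Nat.cast_zero, sub_zero]
  exact_mod_cast h1

lemma block_val (p : ℕ) [hp : Fact p.Prime] (hp5 : 5 ≤ p) (k : ℕ) :
    0 < padicValRat p (∑ j ∈ range (p-1), (1:ℚ)/((k*p+j : ℕ) + 1)) := by
  obtain ⟨m, hm⟩ : ∃ m, p = 2*m+1 := (Nat.Prime.odd_of_ne_two hp.out (by omega))
  have hm2 : 2 ≤ m := by omega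
  have hsplit : p - 1 = m + m := by omega
  rw [hsplit, sum_pairs]
  have key : ∀ r, r < m → 0 < padicValRat p
      ((1:ℚ)/((k*p+r : ℕ) + 1) + 1/((k*p+(m+m-1-r) : ℕ) + 1)) := by
    intro r hr
    have e1 : ((k*p+r : ℕ) : ℚ) + 1 = ((k*p+r+1 : ℕ) : ℚ) := by push_cast; ring
    have e2 : ((k*p+(m+m-1-r) : ℕ) : ℚ) + 1 = ((k*p+(m+m-r) : ℕ) : ℚ) := by
      have : m+m-1-r+1 = m+m-r := by omega
      rw [← this]; push_cast; ring
    rw [e1, e2]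
    apply pair_val p (by omega) (by omega)
    · intro h
      have h2 : p ∣ r + 1 := by
        have := (Nat.dvd_add_right (Dvd.intro k (mul_comm p k))).mp (by rwa [Nat.add_assoc] at h)
        exact this
      have := Nat.le_of_dvd (by omega) h2
      omega
    · intro h
      have h2 : p ∣ (m+m-r) := (Nat.dvd_add_right (Dvd.intro k (mul_comm p k))).mp h
      have := Nat.le_of_dvd (by omega) h2
      omega
    · have : k*p+r+1 + (k*p+(m+m-r)) = (2*k+1)*p := by
        have : r ≤ m + m := by omega
        zify [this]
        rw [hm]; push_cast; ring
      rw [this]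
      exact Dvd.intro_left _ rfl
  apply padicValRat.sum_pos_of_pos
  · intro i hi
    exact key i hi
  · apply ne_of_gt
    apply Finset.sum_pos
    · intro i _; positivity
    · exact nonempty_range_iff.mpr (by omega)

lemma block_pos (p k : ℕ) (hp : 0 < p) :
    0 < ∑ j ∈ range (p-1), (1:ℚ)/((k*p+j : ℕ) + 1) ∨ p = 1 := by
  rcases Nat.lt_or_ge p 2 with h | h
  · right; omega
  · left
    apply Finset.sum_pos
    · intro i _; positivity
    · exact nonempty_range_iff.mpr (by omega)

lemma H_mul (p n : ℕ) (hp : 0 < p) :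
    H (p * n) = (∑ k ∈ range n, ∑ j ∈ range (p-1), (1:ℚ)/((k*p+j : ℕ) + 1))
      + (1/p) * H n := by
  obtain ⟨q, rfl⟩ : ∃ q, p = q + 1 := ⟨p - 1, by omega⟩
  simp only [Nat.add_sub_cancel]
  induction n with
  | zero => simp [H]
  | succ n ih =>
    have hpn : (q+1) * (n+1) = (q+1)*n + (q+1) := by ring
    unfold H at *
    rw [hpn, Finset.sum_range_add, ih, Finset.sum_range_succ (n := n),
        Finset.sum_range_succ (f := fun i => (1:ℚ)/((i:ℚ)+1)) (n := n),
        Finset.sum_range_succ (f := fun j => (1:ℚ)/(((q+1)*n+j : ℕ) + 1))]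
    have e2 : (((q+1)*n+q : ℕ) : ℚ) + 1 = ((q:ℚ)+1) * ((n : ℚ) + 1) := by
      push_cast; ring
    rw [e2]
    have hpQ : ((q:ℚ)+1) ≠ 0 := by positivity
    have hnQ : ((n:ℚ)+1) ≠ 0 := by positivity
    rw [mul_comm (q+1) n]
    generalize (∑ x ∈ range n, ∑ x_1 ∈ range q, (1:ℚ) / (((x * (q + 1) + x_1 : ℕ) : ℚ) + 1)) = S
    field_simp
    push_cast
    ring

lemma sum_sq_zmod (p : ℕ) [hp : Fact p.Prime] (hp5 : 5 ≤ p) :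
    ∑ x : ZMod p, x^2 = 0 := by
  have hcast : ∀ n : ℕ, 2 ≤ n → n < p → ((n:ℕ) : ZMod p) ≠ 0 := by
    intro n h1 h2
    rw [Ne, ZMod.natCast_eq_zero_iff]
    intro h; have := Nat.le_of_dvd (by omega) h; omega
  have h2 : (2 : ZMod p) ≠ 0 := by simpa using hcast 2 (by norm_num) (by omega)
  have h3 : (3 : ZMod p) ≠ 0 := by simpa using hcast 3 (by norm_num) (by omega)
  have hbij : Function.Bijective (fun x : ZMod p => 2 * x) :=
    IsUnit.isUnit_iff_mulLeft_bijective.mp (h2.isUnit)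
  have key : ∑ x : ZMod p, (2*x)^2 = ∑ x : ZMod p, x^2 :=
    Fintype.sum_bijective _ hbij _ _ (fun x => rfl)
  have h4 : ∑ x : ZMod p, (2*x)^2 = 4 * ∑ x : ZMod p, x^2 := by
    rw [Finset.mul_sum]; exact Finset.sum_congr rfl (fun x _ => by ring)
  have h30 : (3 : ZMod p) * ∑ x : ZMod p, x^2 = 0 := by
    have := key.symm; rw [h4] at this
    have := sub_eq_zero.mpr this.symm
    calc (3 : ZMod p) * ∑ x : ZMod p, x^2
        = 4 * (∑ x : ZMod p, x^2) - ∑ x : ZMod p, x^2 := by ring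
      _ = 0 := this
  exact (mul_eq_zero.mp h30).resolve_left h3

lemma sum_inv_sq_zmod (p : ℕ) [hp : Fact p.Prime] (hp5 : 5 ≤ p) :
    ∑ x : ZMod p, (x^2)⁻¹ = 0 := by
  have : ∑ x : ZMod p, (x^2)⁻¹ = ∑ x : ZMod p, x^2 := by
    refine (Fintype.sum_bijective (fun x : ZMod p => x⁻¹) inv_involutive.bijective
      _ _ (fun x => ?_)).symm
    simp [inv_pow]
  rw [this]; exact sum_sq_zmod p hp5

lemma sum_range_castZMod {M : Type*} [AddCommMonoid M] (p : ℕ) [NeZero p] (f : ZMod p → M) :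
    ∑ i ∈ range p, f (i : ZMod p) = ∑ x : ZMod p, f x := by
  refine Finset.sum_nbij' (fun a => (a : ZMod p)) (fun x => x.val) ?_ ?_ ?_ ?_ ?_
  · intro a _; exact mem_univ _
  · intro x _; exact mem_range.mpr (ZMod.val_lt x)
  · intro a ha; exact ZMod.val_cast_of_lt (mem_range.mp ha)
  · intro x _; exact ZMod.natCast_zmod_val x
  · intro a _; rfl

lemma half_inv_sq (p m : ℕ) [hp : Fact p.Prime] (hp5 : 5 ≤ p) (hm : p = 2*m+1) :
    ∑ r ∈ range m, (((r+1 : ℕ) : ZMod p)^2)⁻¹ = 0 := by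
  have h2 : (2 : ZMod p) ≠ 0 := by
    have : ((2:ℕ) : ZMod p) ≠ 0 := by
      rw [Ne, ZMod.natCast_eq_zero_iff]
      intro h; have := Nat.le_of_dvd (by omega) h; omega
    simpa using this
  set f : ℕ → ZMod p := fun n => ((n : ZMod p)^2)⁻¹ with hf
  have hfull : ∑ r ∈ range (m+m), f (r+1) = 0 := by
    have h1 : ∑ i ∈ range p, f i = ∑ x : ZMod p, (x^2)⁻¹ :=
      sum_range_castZMod p (fun x => (x^2)⁻¹)
    have h2' : range p = range ((m+m) + 1) := by rw [show p = (m+m)+1 by omega]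
    rw [h2', Finset.sum_range_succ'] at h1
    have : f 0 = 0 := by simp [hf]
    rw [this, add_zero] at h1
    rw [h1]
    exact sum_inv_sq_zmod p hp5
  rw [sum_pairs] at hfull
  have hrefl : ∀ r ∈ range m, f (m + m - 1 - r + 1) = f (r+1) := by
    intro r hr
    simp only [mem_range] at hr
    have e : m + m - 1 - r + 1 = m + m - r := by omega
    rw [e, hf]
    have : ((m + m - r : ℕ) : ZMod p) = -(((r+1 : ℕ) : ZMod p)) := by
      have hle : r ≤ m + m := by omega
      rw [Nat.cast_sub hle]
      have hmm : ((m + m : ℕ) : ZMod p) = -1 := by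
        rw [show m + m = p - 1 by omega, Nat.cast_sub (by omega : 1 ≤ p),
          ZMod.natCast_self]
        simp
      rw [hmm]; push_cast; ring
    simp only [this]
    rw [neg_pow]
    simp
  rw [Finset.sum_congr rfl (fun r hr => by rw [hrefl r hr])] at hfull
  have hkey : (2 : ZMod p) * ∑ r ∈ range m, f (r+1) = 0 := by
    rw [Finset.mul_sum]
    rw [← hfull]
    exact Finset.sum_congr rfl fun r _ => by ring
  have := (mul_eq_zero.mp hkey).resolve_left h2
  simpa [hf] using this

lemma pairN (N a b : ℕ) (ha : 0 < a) (hb : 0 < b) (hd : a*b ∣ N) :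
    N/a + N/b = (a+b) * (N/(a*b)) := by
  obtain ⟨q, hq⟩ := hd
  subst hq
  rw [Nat.mul_div_cancel_left _ (by positivity : 0 < a*b)]
  have h1 : a*b*q/a = b*q := by rw [mul_assoc, Nat.mul_div_cancel_left _ ha]
  have h2 : a*b*q/b = a*q := by
    rw [show a*b*q = b*(a*q) by ring, Nat.mul_div_cancel_left _ hb]
  rw [h1, h2]; ring

lemma wolstenholme_lite (p : ℕ) [hp : Fact p.Prime] (hp5 : 5 ≤ p) :
    2 ≤ padicValRat p (H (p-1)) := by
  obtain ⟨m, hm⟩ : ∃ m, p = 2*m+1 := hp.out.odd_of_ne_two (by omega)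
  have hm2 : 2 ≤ m := by omega
  set N := (p-1).factorial with hN
  have hNpos : 0 < N := Nat.factorial_pos _
  set A := ∑ i ∈ range (p-1), N/(i+1) with hA
  have hdvd : ∀ i, i < p-1 → (i+1) ∣ N := fun i hi =>
    Nat.dvd_factorial (by omega) (by omega)
  have hApos : 0 < A := by
    apply Finset.sum_pos
    · intro i hi
      exact Nat.div_pos (Nat.le_of_dvd hNpos (hdvd i (mem_range.mp hi))) (by omega)
    · exact nonempty_range_iff.mpr (by omega)
  have hAQ : (A : ℚ) = N * H (p-1) := by
    rw [hA, Nat.cast_sum]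
    unfold H
    rw [Finset.mul_sum]
    apply Finset.sum_congr rfl
    intro i hi
    rw [Nat.cast_div (hdvd i (mem_range.mp hi)) (by positivity)]
    push_cast; ring
  have hp2A : p^2 ∣ A := by
    have hA2 : A = ∑ r ∈ range m, p * (N/((r+1)*(m+m-r))) := by
      rw [hA, show p - 1 = m + m by omega, sum_pairs (fun i => N/(i+1)) m]
      apply Finset.sum_congr rfl
      intro r hr
      simp only [mem_range] at hr
      have e : m + m - 1 - r + 1 = m + m - r := by omega
      rw [e]
      have habd : (r+1)*(m+m-r) ∣ N := by
        have h1 : (r+1) ∣ (m+m-r-1).factorial :=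
          Nat.dvd_factorial (by omega) (by omega)
        have h2 : (r+1)*(m+m-r) ∣ (m+m-r).factorial := by
          have : (m+m-r).factorial = (m+m-r) * (m+m-r-1).factorial := by
            rw [show m+m-r = (m+m-r-1)+1 by omega, Nat.factorial_succ, Nat.add_sub_cancel]
          rw [this, mul_comm (r+1) (m+m-r)]
          exact mul_dvd_mul dvd_rfl h1
        exact h2.trans (Nat.factorial_dvd_factorial (by omega))
      rw [pairN N (r+1) (m+m-r) (by omega) (by omega) habd]
      congr 1
      omega
    rw [hA2, ← Finset.mul_sum]
    set C := ∑ r ∈ range m, N/((r+1)*(m+m-r)) with hC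
    have hpC : p ∣ C := by
      rw [← ZMod.natCast_eq_zero_iff]
      rw [hC, Nat.cast_sum]
      have hterm : ∀ r ∈ range m, ((N/((r+1)*(m+m-r)) : ℕ) : ZMod p)
          = (((r+1 : ℕ) : ZMod p)^2)⁻¹ := by
        intro r hr
        simp only [mem_range] at hr
        set d := (r+1)*(m+m-r) with hd
        have habd : d ∣ N := by
          have h1 : (r+1) ∣ (m+m-r-1).factorial :=
            Nat.dvd_factorial (by omega) (by omega)
          have h2 : (r+1)*(m+m-r) ∣ (m+m-r).factorial := by
            have : (m+m-r).factorial = (m+m-r) * (m+m-r-1).factorial := by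
              rw [show m+m-r = (m+m-r-1)+1 by omega, Nat.factorial_succ, Nat.add_sub_cancel]
            rw [this, mul_comm (r+1) (m+m-r)]
            exact mul_dvd_mul dvd_rfl h1
          exact h2.trans (Nat.factorial_dvd_factorial (by omega))
        have hdcast : ((d : ℕ) : ZMod p) = -(((r+1 : ℕ) : ZMod p))^2 := by
          rw [hd]
          push_cast
          have hmm : ((m + m : ℕ) : ZMod p) - (r : ZMod p) = -((r : ZMod p)+1) := by
            have h1 : ((m + m : ℕ) : ZMod p) = -1 := by
              rw [show m + m = p - 1 by omega, Nat.cast_sub (by omega : 1 ≤ p),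
                ZMod.natCast_self]
              simp
            rw [h1]; ring
          rw [Nat.cast_sub (by omega : r ≤ m+m), hmm]
          ring
        have hd0 : ((d : ℕ) : ZMod p) ≠ 0 := by
          rw [Ne, ZMod.natCast_eq_zero_iff, hd]
          intro hcon
          rcases (Nat.Prime.dvd_mul hp.out).mp hcon with h | h <;>
            · have := Nat.le_of_dvd (by omega) h; omega
        obtain ⟨q, hq⟩ := habd
        have hqcast : ((N/d : ℕ) : ZMod p) = (q : ZMod p) := by
          rw [hq, Nat.mul_div_cancel_left _
            (by rw [hd]; exact Nat.mul_pos (by omega) (by omega) : 0 < d)]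
        have hNq : ((N : ℕ) : ZMod p) = ((d:ℕ) : ZMod p) * (q : ZMod p) := by
          rw [hq]; push_cast; ring
        have hNm1 : ((N : ℕ) : ZMod p) = -1 := ZMod.wilsons_lemma p
        have hqv : (q : ZMod p) = (((d:ℕ) : ZMod p))⁻¹ * ((N:ℕ) : ZMod p) := by
          rw [hNq, inv_mul_cancel_left₀ hd0]
        rw [hqcast, hqv, hNm1, hdcast]
        rw [inv_neg]
        field_simp
      rw [Finset.sum_congr rfl hterm]
      exact half_inv_sq p m hp5 hm
    obtain ⟨c, hc⟩ := hpC
    exact ⟨c, by rw [hc]; ring⟩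
  have hHA : H (p-1) = (A : ℚ) / (N : ℚ) := by
    rw [hAQ]
    field_simp
  rw [hHA, padicValRat.div (by exact_mod_cast hApos.ne' : (A:ℚ) ≠ 0)
    (by exact_mod_cast hNpos.ne' : (N:ℚ) ≠ 0), padicValRat.of_nat, padicValRat.of_nat]
  have hvN : padicValNat p N = 0 := by
    apply padicValNat.eq_zero_of_not_dvd
    rw [hN, Nat.Prime.dvd_factorial hp.out]
    omega
  have hvA : 2 ≤ padicValNat p A := (padicValNat_dvd_iff_le hApos.ne').mp hp2A
  rw [hvN]
  simp only [Nat.cast_zero, sub_zero]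
  exact_mod_cast hvA

theorem stmt_14 (p : ℕ) (hp : p.Prime) (hp5 : 5 ≤ p) :
    1 ≤ padicValRat p (H (p - 1)) ∧
      1 ≤ padicValRat p (H (p * (p - 1))) ∧
        1 ≤ padicValRat p (H (p ^ 2 - 1)) := by
  haveI : Fact p.Prime := ⟨hp⟩
  have hw : 2 ≤ padicValRat p (H (p-1)) := wolstenholme_lite p hp5
  have part1 : 1 ≤ padicValRat p (H (p-1)) := by omega
  have hH1pos : 0 < H (p-1) := H_pos (by omega)
  -- part 2
  have hdecomp := H_mul p (p-1) (by omega)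
  have hXpos : 0 < ∑ k ∈ range (p-1), ∑ j ∈ range (p-1), (1:ℚ)/((k*p+j : ℕ) + 1) := by
    apply Finset.sum_pos
    · intro k _
      apply Finset.sum_pos
      · intro i _; positivity
      · exact nonempty_range_iff.mpr (by omega)
    · exact nonempty_range_iff.mpr (by omega)
  have hXval : 0 < padicValRat p
      (∑ k ∈ range (p-1), ∑ j ∈ range (p-1), (1:ℚ)/((k*p+j : ℕ) + 1)) := by
    apply padicValRat.sum_pos_of_pos
    · intro k _
      exact block_val p hp5 k
    · exact hXpos.ne'
  have hYpos : 0 < (1/(p:ℚ)) * H (p-1) := by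
    apply mul_pos _ hH1pos
    positivity
  have hYval : 1 ≤ padicValRat p ((1/(p:ℚ)) * H (p-1)) := by
    have hpQ : (1:ℚ)/(p:ℚ) ≠ 0 := by positivity
    rw [padicValRat.mul hpQ hH1pos.ne']
    have hv : padicValRat p ((1:ℚ)/(p:ℚ)) = -1 := by
      rw [one_div, padicValRat.inv, padicValRat.self hp.one_lt]
    rw [hv]
    omega
  have part2 : 1 ≤ padicValRat p (H (p * (p-1))) := by
    rw [hdecomp]
    have hne : (∑ k ∈ range (p-1), ∑ j ∈ range (p-1), (1:ℚ)/((k*p+j : ℕ) + 1))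
        + (1/(p:ℚ)) * H (p-1) ≠ 0 := by
      have := add_pos hXpos hYpos
      exact this.ne'
    calc (1:ℤ) ≤ min (padicValRat p
          (∑ k ∈ range (p-1), ∑ j ∈ range (p-1), (1:ℚ)/((k*p+j : ℕ) + 1)))
          (padicValRat p ((1/(p:ℚ)) * H (p-1))) := le_min (by omega) hYval
      _ ≤ _ := padicValRat.min_le_padicValRat_add hne
  refine ⟨part1, part2, ?_⟩
  -- part 3
  have hsplit : p^2 - 1 = p*(p-1) + (p-1) := by
    obtain ⟨k, rfl⟩ : ∃ k, p = k + 1 := ⟨p - 1, by omega⟩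
    simp only [Nat.add_sub_cancel]
    ring_nf
    omega
  have hdecomp3 : H (p^2 - 1) = H (p*(p-1))
      + ∑ j ∈ range (p-1), (1:ℚ)/(((p-1)*p+j : ℕ) + 1) := by
    unfold H
    rw [hsplit, Finset.sum_range_add]
    congr 1
    apply Finset.sum_congr rfl
    intro j _
    rw [mul_comm p (p-1)]
  rw [hdecomp3]
  have hBpos : 0 < ∑ j ∈ range (p-1), (1:ℚ)/(((p-1)*p+j : ℕ) + 1) := by
    apply Finset.sum_pos
    · intro i _; positivity
    · exact nonempty_range_iff.mpr (by omega)
  have hBval := block_val p hp5 (p-1)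
  have hne : H (p*(p-1)) + ∑ j ∈ range (p-1), (1:ℚ)/(((p-1)*p+j : ℕ) + 1) ≠ 0 := by
    have hp2 : 0 < H (p*(p-1)) := H_pos (by
      have : 1 ≤ p - 1 := by omega
      calc 0 < 1 := by omega
        _ ≤ p * (p-1) := by
            calc 1 ≤ p := by omega
              _ = p * 1 := by ring
              _ ≤ p * (p-1) := Nat.mul_le_mul_left p this)
    exact (add_pos hp2 hBpos).ne'
  calc (1:ℤ) ≤ min (padicValRat p (H (p*(p-1))))
        (padicValRat p (∑ j ∈ range (p-1), (1:ℚ)/(((p-1)*p+j : ℕ) + 1))) :=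
        le_min part2 (by omega)
    _ ≤ _ := padicValRat.min_le_padicValRat_add hne
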